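/- Let M be a matroid and 𝓜 a proper modular cut of M. If F is a minimal element of 𝓜, then the flat F ∪ {e} of the single-element extension M ∪_𝓜 e is irreducible, i.e., it cannot be written as a disjoint union of two nonempty flats G, H of M ∪_𝓜 e with rk(F ∪ {e}) = rk(G) + rk(H). -/

import Mathlib

variable {α : Type*}

/-- The rank of a set in a matroid: the supremum of the cardinalities of
independent subsets of the set. -/
noncomputable def Matroid.mrk (M : Matroid α) (X : Set α) : ℕ :=
  sSup (Set.ncard '' {I | M.Indep I ∧ I ⊆ X})

namespace Matroid

variable {M : Matroid α} {X Y I : Set α}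

lemma mrk_bddAbove (hE : M.E.Finite) (X : Set α) :
    BddAbove (Set.ncard '' {I | M.Indep I ∧ I ⊆ X}) := by
  refine ⟨M.E.ncard, ?_⟩
  rintro n ⟨I, ⟨hI, -⟩, rfl⟩
  exact Set.ncard_le_ncard hI.subset_ground hE

lemma mrk_img_nonempty (M : Matroid α) (X : Set α) :
    (Set.ncard '' {I | M.Indep I ∧ I ⊆ X}).Nonempty :=
  ⟨0, ⟨∅, ⟨M.empty_indep, Set.empty_subset _⟩, Set.ncard_empty α⟩⟩

lemma ncard_le_mrk (hE : M.E.Finite) (hI : M.Indep I) (hIX : I ⊆ X) :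
    I.ncard ≤ M.mrk X :=
  le_csSup (mrk_bddAbove hE X) ⟨I, ⟨hI, hIX⟩, rfl⟩

lemma exists_mrk_witness (hE : M.E.Finite) (X : Set α) :
    ∃ I, M.Indep I ∧ I ⊆ X ∧ I.ncard = M.mrk X := by
  have h := Nat.sSup_mem (M.mrk_img_nonempty X) (mrk_bddAbove hE X)
  obtain ⟨I, ⟨hI, hIX⟩, hc⟩ := h
  exact ⟨I, hI, hIX, hc⟩

lemma IsBasis'.ncard_eq_mrk (hE : M.E.Finite) (hIX : M.IsBasis' I X) :
    I.ncard = M.mrk X := by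
  refine le_antisymm (ncard_le_mrk hE hIX.indep hIX.subset) ?_
  obtain ⟨J, hJ, hJX, hJc⟩ := exists_mrk_witness hE (M := M) X
  obtain ⟨J', hJ', hJJ'⟩ := hJ.subset_isBasis'_of_subset hJX
  have h1 : J.ncard ≤ J'.ncard :=
    Set.ncard_le_ncard hJJ' (hE.subset hJ'.indep.subset_ground)
  have h2 : J'.ncard = I.ncard := by
    rw [Set.ncard, Set.ncard, hJ'.encard_eq_encard hIX]
  omega

lemma mrk_mono (hE : M.E.Finite) (hXY : X ⊆ Y) : M.mrk X ≤ M.mrk Y := by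
  refine csSup_le_csSup (mrk_bddAbove hE Y) (M.mrk_img_nonempty X) ?_
  rintro n ⟨I, ⟨hI, hIX⟩, rfl⟩
  exact ⟨I, ⟨hI, hIX.trans hXY⟩, rfl⟩

lemma mrk_closure_eq (hE : M.E.Finite) (hX : X ⊆ M.E) :
    M.mrk (M.closure X) = M.mrk X := by
  obtain ⟨I, hI⟩ := M.exists_isBasis X hX
  rw [← hI.isBasis'.ncard_eq_mrk hE, ← hI.isBasis_closure_right.isBasis'.ncard_eq_mrk hE]

lemma mrk_union_le (hE : M.E.Finite) (A B : Set α) :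
    M.mrk (A ∪ B) ≤ M.mrk A + M.mrk B := by
  obtain ⟨I, hI, hIX, hIc⟩ := exists_mrk_witness hE (M := M) (A ∪ B)
  have hsplit : I = (I ∩ A) ∪ (I ∩ B) := by
    rw [← Set.inter_union_distrib_left, Set.inter_eq_left.mpr hIX]
  calc M.mrk (A ∪ B) = I.ncard := hIc.symm
    _ ≤ (I ∩ A).ncard + (I ∩ B).ncard := by
        nth_rewrite 1 [hsplit]; exact Set.ncard_union_le _ _
    _ ≤ M.mrk A + M.mrk B :=
        Nat.add_le_add
          (ncard_le_mrk hE (hI.subset Set.inter_subset_left) Set.inter_subset_right)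
          (ncard_le_mrk hE (hI.subset Set.inter_subset_left) Set.inter_subset_right)

lemma subset_closure_empty_of_mrk_zero (hE : M.E.Finite) (hX : X ⊆ M.E)
    (h : M.mrk X = 0) : X ⊆ M.closure ∅ := by
  obtain ⟨I, hI⟩ := M.exists_isBasis X hX
  have hc : I.ncard = 0 := by rw [hI.isBasis'.ncard_eq_mrk hE, h]
  have : I = ∅ := (Set.ncard_eq_zero (hE.subset hI.indep.subset_ground)).mp hc
  rw [← this]
  exact hI.subset_closure

end Matroid

/-- A *modular cut* of a matroid `M`: an upward-closed (within the lattice of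
flats) family of flats of `M` which is closed under meets of modular pairs. -/
def Matroid.IsModularCutFam (M : Matroid α) (𝓜 : Set (Set α)) : Prop :=
  (∀ F ∈ 𝓜, M.IsFlat F) ∧
  (∀ F ∈ 𝓜, ∀ G : Set α, M.IsFlat G → F ⊆ G → G ∈ 𝓜) ∧
  (∀ F ∈ 𝓜, ∀ G ∈ 𝓜,
    M.mrk (F ∪ G) + M.mrk (F ∩ G) = M.mrk F + M.mrk G → F ∩ G ∈ 𝓜)

/-- `N` is the single-element extension `M ∪_𝓜 e` of `M` along the modular cut
`𝓜`: it is the matroid on `M.E ∪ {e}` whose rank function satisfies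
`rk_N S = rk_M S` for `S ⊆ M.E`, and `rk_N (S ∪ {e}) = rk_M S` if
`cl_M S ∈ 𝓜`, and `rk_M S + 1` otherwise. -/
def Matroid.IsSingleElemExt (M : Matroid α) (𝓜 : Set (Set α)) (e : α)
    (N : Matroid α) : Prop :=
  N.E = insert e M.E ∧
  (∀ S : Set α, S ⊆ M.E → N.mrk S = M.mrk S) ∧
  (∀ S : Set α, S ⊆ M.E → M.closure S ∈ 𝓜 → N.mrk (insert e S) = M.mrk S) ∧
  (∀ S : Set α, S ⊆ M.E → M.closure S ∉ 𝓜 →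
    N.mrk (insert e S) = M.mrk S + 1)

/-- The main argument, assuming `e ∈ G`. -/
lemma ext_min_aux (M : Matroid α) [M.Finite]
    (𝓜 : Set (Set α)) (h𝓜 : M.IsModularCutFam 𝓜)
    (e : α) (he : e ∉ M.E) (N : Matroid α)
    (hN : M.IsSingleElemExt 𝓜 e N) (F : Set α) (hF : F ∈ 𝓜)
    (hmin : ∀ G ∈ 𝓜, G ⊆ F → G = F) (G H : Set α)
    (hG : N.IsFlat G) (hH : N.IsFlat H) (hHne : H.Nonempty)
    (hdisj : Disjoint G H) (hunion : G ∪ H = insert e F)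
    (heG : e ∈ G)
    (hrk : N.mrk (insert e F) = N.mrk G + N.mrk H) : False := by
  obtain ⟨hNE, hrk1, hrk2, hrk3⟩ := hN
  have hMfin : M.E.Finite := M.ground_finite
  have hNfin : N.E.Finite := by rw [hNE]; exact hMfin.insert e
  have hFflat : M.IsFlat F := h𝓜.1 F hF
  have hFE : F ⊆ M.E := hFflat.subset_ground
  have heF : e ∉ F := fun h => he (hFE h)
  have heH : e ∉ H := fun h => (hdisj.ne_of_mem heG h) rfl
  -- H ⊆ F
  have hHF : H ⊆ F := by
    intro x hx
    have : x ∈ insert e F := hunion ▸ Set.mem_union_right G hx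
    rcases this with rfl | h
    · exact absurd hx heH
    · exact h
  set G' : Set α := G \ {e} with hG'def
  have hG'F : G' ⊆ F := by
    intro x hx
    have : x ∈ insert e F := hunion ▸ Set.mem_union_left H hx.1
    rcases this with rfl | h
    · exact absurd rfl hx.2
    · exact h
  have hG'E : G' ⊆ M.E := hG'F.trans hFE
  have hGeq : G = insert e G' := by
    rw [hG'def, Set.insert_diff_singleton, Set.insert_eq_self.mpr heG]
  have hG'H : G' ∪ H = F := by
    apply subset_antisymm (Set.union_subset hG'F hHF)
    intro x hx
    have hxe : x ≠ e := fun h => heF (h ▸ hx)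
    have : x ∈ G ∪ H := hunion ▸ Set.mem_insert_of_mem e hx
    rcases this with h | h
    · exact Set.mem_union_left H ⟨h, hxe⟩
    · exact Set.mem_union_right G' h
  -- rank of insert e F
  have hrF : N.mrk (insert e F) = M.mrk F := by
    apply hrk2 F hFE
    rwa [hFflat.closure]
  have hrH : N.mrk H = M.mrk H := hrk1 H (hHF.trans hFE)
  by_cases hcl : M.closure G' ∈ 𝓜
  · -- closure of G' is in the cut; by minimality it equals F
    have hclF : M.closure G' = F := by
      apply hmin _ hcl
      rw [← hFflat.closure]
      exact M.closure_subset_closure hG'F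
    have hG'rk : M.mrk G' = M.mrk F := by
      rw [← Matroid.mrk_closure_eq hMfin hG'E, hclF]
    have hrG : N.mrk G = M.mrk G' := by
      rw [hGeq]; exact hrk2 G' hG'E hcl
    have hH0 : N.mrk H = 0 := by
      rw [hrF, hrG, hrH, hG'rk] at hrk
      omega
    obtain ⟨x, hx⟩ := hHne
    have hxG : x ∈ G := by
      have h1 : H ⊆ N.closure ∅ :=
        Matroid.subset_closure_empty_of_mrk_zero hNfin hH.subset_ground hH0
      have h2 : N.closure ∅ ⊆ N.closure G := N.closure_subset_closure (Set.empty_subset G)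
      rw [hG.closure] at h2
      exact h2 (h1 hx)
    exact (hdisj.ne_of_mem hxG hx) rfl
  · -- closure of G' not in the cut
    have hrG : N.mrk G = M.mrk G' + 1 := by
      rw [hGeq]; exact hrk3 G' hG'E hcl
    have hsub : M.mrk F ≤ M.mrk G' + M.mrk H := by
      rw [← hG'H]; exact Matroid.mrk_union_le hMfin G' H
    rw [hrF, hrG, hrH] at hrk
    omega

/-- if `F` is a minimal element of a proper modular cut `𝓜`, then
the flat `F ∪ {e}` of the single-element extension `M ∪_𝓜 e` is irreducible:
it cannot be partitioned into two nonempty flats whose ranks add up to its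
rank. -/
theorem ext_min_modular_cut_irreducible (M : Matroid α) [M.Finite]
    (𝓜 : Set (Set α)) (h𝓜 : M.IsModularCutFam 𝓜)
    (hproper : M.closure ∅ ∉ 𝓜) (e : α) (he : e ∉ M.E) (N : Matroid α)
    (hN : M.IsSingleElemExt 𝓜 e N) (F : Set α) (hF : F ∈ 𝓜)
    (hmin : ∀ G ∈ 𝓜, G ⊆ F → G = F) :
    ¬ ∃ G H : Set α, N.IsFlat G ∧ N.IsFlat H ∧ G.Nonempty ∧ H.Nonempty ∧
      Disjoint G H ∧ G ∪ H = insert e F ∧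
      N.mrk (insert e F) = N.mrk G + N.mrk H := by
  rintro ⟨G, H, hG, hH, hGne, hHne, hdisj, hunion, hrk⟩
  have heGH : e ∈ G ∪ H := hunion ▸ Set.mem_insert e F
  rcases heGH with heG | heH
  · exact ext_min_aux M 𝓜 h𝓜 e he N hN F hF hmin G H hG hH hHne hdisj hunion heG hrk
  · refine ext_min_aux M 𝓜 h𝓜 e he N hN F hF hmin H G hH hG hGne hdisj.symm ?_ heH ?_
    · rwa [Set.union_comm]
    · rwa [Nat.add_comm]
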